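/- Let S be uniform on GF(q)^M (M source packets) and let an eavesdropper observe Y = G·S for a Γ×M matrix G over GF(q) with Γ < M such that no row span vector of GF(q)^M of the form a standard basis vector e_i lies in the row space of G. Then for each coordinate s_i of S, H(s_i | Y) = H(s_i) = 1 (base-q), i.e., the code is weakly secure. -/

import Mathlib

open Finset

/-- Probability that the random variable `X` on the finite weighted space `(Ω, μ)`
takes the value `a`. -/
noncomputable def pr {Ω α : Type*} [Fintype Ω] [DecidableEq α]
    (μ : Ω → ℝ) (X : Ω → α) (a : α) : ℝ :=
  ∑ ω ∈ Finset.univ.filter (fun ω => X ω = a), μ ω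

/-- Base-`q` Shannon entropy of the random variable `X`. -/
noncomputable def ent {Ω α : Type*} [Fintype Ω] [Fintype α] [DecidableEq α]
    (q : ℝ) (μ : Ω → ℝ) (X : Ω → α) : ℝ :=
  -∑ a, pr μ X a * Real.logb q (pr μ X a)

/-- Conditional entropy `H(X | Y) = H(X, Y) - H(Y)` (base `q`). -/
noncomputable def condEnt {Ω α β : Type*} [Fintype Ω] [Fintype α] [Fintype β]
    [DecidableEq α] [DecidableEq β] (q : ℝ) (μ : Ω → ℝ) (X : Ω → α) (Y : Ω → β) : ℝ :=
  ent q μ (fun ω => (X ω, Y ω)) - ent q μ Y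

/-- Mutual information `I(X ; Y) = H(X) - H(X | Y)` (base `q`). -/
noncomputable def mutInfo {Ω α β : Type*} [Fintype Ω] [Fintype α] [Fintype β]
    [DecidableEq α] [DecidableEq β] (q : ℝ) (μ : Ω → ℝ) (X : Ω → α) (Y : Ω → β) : ℝ :=
  ent q μ X - condEnt q μ X Y

section Aux

variable {Ω : Type*} [Fintype Ω]

lemma pr_sum {α : Type*} [Fintype α] [DecidableEq α] (μ : Ω → ℝ) (X : Ω → α) :
    ∑ a, pr μ X a = ∑ ω, μ ω := by
  simpa [pr] using Finset.sum_fiberwise Finset.univ X μ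

lemma pr_comp {α β : Type*} [Fintype α] [DecidableEq α] [DecidableEq β]
    (μ : Ω → ℝ) (S : Ω → α) (f : α → β) (b : β) :
    pr μ (fun ω => f (S ω)) b = ∑ v ∈ Finset.univ.filter (fun v => f v = b), pr μ S v := by
  classical
  have key : ∀ v ∈ Finset.univ.filter (fun v => f v = b),
      pr μ S v = ∑ ω ∈ (Finset.univ.filter (fun ω => f (S ω) = b)).filter
        (fun ω => S ω = v), μ ω := by
    intro v hv
    have hfv : f v = b := (Finset.mem_filter.mp hv).2
    unfold pr
    congr 1
    ext ω
    simp only [Finset.mem_filter, Finset.mem_univ, true_and]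
    constructor
    · intro h; exact ⟨by rw [h, hfv], h⟩
    · intro h; exact h.2
  rw [Finset.sum_congr rfl key]
  rw [Finset.sum_fiberwise_of_maps_to (fun ω hω => by
    simp only [Finset.mem_filter, Finset.mem_univ, true_and] at hω ⊢; exact hω)]
  rfl

lemma ent_of_uniform {α : Type*} [Fintype α] [DecidableEq α] (q : ℝ) (μ : Ω → ℝ)
    (X : Ω → α) (n : ℕ) (hn : 0 < n)
    (hp : ∀ a, pr μ X a = 0 ∨ pr μ X a = 1 / n)
    (hsum : ∑ a, pr μ X a = 1) :
    ent q μ X = Real.logb q n := by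
  classical
  have hnR : (0:ℝ) < n := by exact_mod_cast hn
  set T := Finset.univ.filter (fun a => pr μ X a = 1 / (n:ℝ)) with hT
  have hsplit : ∀ (g : ℝ → ℝ), g 0 = 0 → ∑ a, g (pr μ X a) = ∑ a ∈ T, g (1 / (n:ℝ)) := by
    intro g hg0
    rw [← Finset.sum_filter_add_sum_filter_not Finset.univ
      (fun a => pr μ X a = 1 / (n:ℝ)) (fun a => g (pr μ X a))]
    have h1 : ∑ a ∈ T, g (pr μ X a) = ∑ a ∈ T, g (1 / (n:ℝ)) :=
      Finset.sum_congr rfl (fun a ha => by rw [(Finset.mem_filter.mp ha).2])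
    have h2 : ∑ a ∈ Finset.univ.filter (fun a => ¬ pr μ X a = 1 / (n:ℝ)),
        g (pr μ X a) = 0 := by
      apply Finset.sum_eq_zero
      intro a ha
      rcases hp a with h | h
      · rw [h, hg0]
      · exact absurd h (Finset.mem_filter.mp ha).2
    rw [h2, add_zero, h1]
  have hTcard : (T.card : ℝ) = n := by
    have := hsplit id rfl
    simp only [id] at this
    rw [hsum, Finset.sum_const, nsmul_eq_mul] at this
    field_simp at this
    exact_mod_cast this.symm
  unfold ent
  have := hsplit (fun x => x * Real.logb q x) (by simp)
  rw [this, Finset.sum_const, nsmul_eq_mul, hTcard]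
  have : (n:ℝ) * (1 / (n:ℝ) * Real.logb q (1 / (n:ℝ))) = Real.logb q (1 / (n:ℝ)) := by
    field_simp
  rw [this, one_div, Real.logb_inv, neg_neg]

lemma fiber_card_eq {V W : Type*} [Fintype V] [DecidableEq V] [DecidableEq W]
    [AddCommGroup V] [AddCommGroup W]
    (f : V → W) (hf : ∀ a b, f (a - b) = f a - f b) (y : W) (v₀ : V) (hv₀ : f v₀ = y) :
    (Finset.univ.filter fun v => f v = y).card
      = (Finset.univ.filter fun v => f v = 0).card := by
  have hadd : ∀ a b : V, f (a + b) = f a + f b := by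
    intro a b
    have := hf (a + b) b
    simp only [add_sub_cancel_right] at this
    rw [eq_sub_iff_add_eq] at this
    exact this.symm
  apply Finset.card_bij' (fun v _ => v - v₀) (fun u _ => u + v₀)
  · intro v hv
    simp only [Finset.mem_filter, Finset.mem_univ, true_and] at hv ⊢
    rw [hf, hv, hv₀, sub_self]
  · intro u hu
    simp only [Finset.mem_filter, Finset.mem_univ, true_and] at hu ⊢
    rw [hadd, hu, hv₀, zero_add]
  · intro v _; exact sub_add_cancel v v₀
  · intro u _; exact add_sub_cancel_right u v₀

/-- Entropy of the image of a uniform r.v. under a subtraction-preserving map is the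
base-`q` log of the cardinality of the image. -/
lemma ent_comp_linear {V W : Type*} [Fintype V] [DecidableEq V] [Fintype W] [DecidableEq W]
    [AddCommGroup V] [AddCommGroup W]
    (q : ℝ) (μ : Ω → ℝ) (hμ1 : ∑ ω, μ ω = 1) (S : Ω → V)
    (hS : ∀ v, pr μ S v = 1 / (Fintype.card V : ℝ))
    (f : V → W) (hf : ∀ a b, f (a - b) = f a - f b) :
    ent q μ (fun ω => f (S ω)) = Real.logb q ((Finset.univ.image f).card) := by
  classical
  set R := Finset.univ.image f with hR
  set K := (Finset.univ.filter fun v => f v = 0).card with hK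
  have hf0 : f 0 = 0 := by have := hf 0 0; simpa using this
  have hK0 : 0 < K := by
    rw [hK]
    exact Finset.card_pos.mpr ⟨0, by simp [hf0]⟩
  have hfiber : ∀ b ∈ R, (Finset.univ.filter fun v => f v = b).card = K := by
    intro b hb
    obtain ⟨v₀, _, hv₀⟩ := Finset.mem_image.mp hb
    exact fiber_card_eq f hf b v₀ hv₀
  have hcount : Fintype.card V = R.card * K := by
    rw [← Finset.card_univ,
      Finset.card_eq_sum_card_fiberwise (fun v _ => Finset.mem_image_of_mem f (Finset.mem_univ v)),
      Finset.sum_congr rfl hfiber, Finset.sum_const, smul_eq_mul]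
  have hRpos : 0 < R.card := by
    rw [hR]
    exact Finset.card_pos.mpr ⟨f 0, Finset.mem_image_of_mem f (Finset.mem_univ 0)⟩
  have hVpos : (0:ℝ) < Fintype.card V := by exact_mod_cast Fintype.card_pos
  have hpr : ∀ b, pr μ (fun ω => f (S ω)) b
      = ((Finset.univ.filter fun v => f v = b).card : ℝ) / (Fintype.card V : ℝ) := by
    intro b
    rw [pr_comp μ S f b, Finset.sum_congr rfl (fun v _ => hS v), Finset.sum_const,
      nsmul_eq_mul]
    ring
  have hp : ∀ b, pr μ (fun ω => f (S ω)) b = 0 ∨ pr μ (fun ω => f (S ω)) b = 1 / R.card := by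
    intro b
    by_cases hb : b ∈ R
    · right
      rw [hpr b, hfiber b hb]
      rw [hcount]
      have hKr : (K:ℝ) ≠ 0 := by exact_mod_cast hK0.ne'
      have hRr : (R.card:ℝ) ≠ 0 := by exact_mod_cast hRpos.ne'
      push_cast
      field_simp
    · left
      rw [hpr b]
      have : (Finset.univ.filter fun v => f v = b) = ∅ := by
        apply Finset.filter_eq_empty_iff.mpr
        intro v _ hv
        exact hb (hv ▸ Finset.mem_image_of_mem f (Finset.mem_univ v))
      rw [this]
      simp
  have hsum : ∑ b, pr μ (fun ω => f (S ω)) b = 1 := by rw [pr_sum, hμ1]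
  exact ent_of_uniform q μ _ R.card hRpos hp hsum

end Aux

/-- If the `i`-th standard basis vector is not in the row space of `G`, then there is a
vector in the kernel of `G` with nonzero `i`-th coordinate. -/
lemma exists_ker_vec {F : Type*} [Field F] {M Γ : ℕ} (G : Matrix (Fin Γ) (Fin M) F)
    (i : Fin M)
    (hrow : Pi.single i (1 : F) ∉ Submodule.span F (Set.range (fun j : Fin Γ => G j))) :
    ∃ k : Fin M → F, G.mulVec k = 0 ∧ k i ≠ 0 := by
  by_contra hcon
  push_neg at hcon
  apply hrow
  -- the coordinate functional vanishes on ker of mulVec, so it factors through the range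
  set L : (Fin M → F) →ₗ[F] (Fin Γ → F) := Matrix.mulVecLin G with hL
  set φ : (Fin M → F) →ₗ[F] F := LinearMap.proj i with hφ
  have hle : LinearMap.ker L ≤ LinearMap.ker φ := by
    intro v hv
    rw [LinearMap.mem_ker] at hv ⊢
    exact hcon v hv
  set φ' : ((Fin M → F) ⧸ LinearMap.ker L) →ₗ[F] F := (LinearMap.ker L).liftQ φ hle with hφ'
  set ψ₀ : LinearMap.range L →ₗ[F] F :=
    φ'.comp (L.quotKerEquivRange.symm : LinearMap.range L →ₗ[F] _) with hψ₀
  obtain ⟨ψ, hψ⟩ := LinearMap.exists_extend ψ₀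
  have hfac : ∀ v : Fin M → F, ψ (L v) = v i := by
    intro v
    have h1 : (⟨L v, LinearMap.mem_range_self L v⟩ : LinearMap.range L)
        = L.quotKerEquivRange (Submodule.Quotient.mk v) := by
      ext; simp
    have h2 : ψ (L v) = ψ₀ ⟨L v, LinearMap.mem_range_self L v⟩ := by
      rw [← hψ]; rfl
    rw [h2, hψ₀, LinearMap.comp_apply, h1]
    simp only [LinearEquiv.coe_coe, LinearEquiv.symm_apply_apply]
    rfl
  -- express the basis vector as a combination of rows
  have heq : Pi.single i (1:F)
      = ∑ j : Fin Γ, ψ (fun j' => if j = j' then 1 else 0) • G j := by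
    funext m
    have := hfac (Pi.single m 1)
    rw [hL] at this
    simp only [Matrix.mulVecLin_apply, Matrix.mulVec_single, mul_one] at this
    rw [show (MulOpposite.op (1:F) • G.col m) = (fun j => G j m) from by ext j; simp] at this
    have hψsum : ψ (fun j => G j m)
        = ∑ j : Fin Γ, G j m • ψ (fun j' => if j = j' then 1 else 0) :=
      LinearMap.pi_apply_eq_sum_univ ψ (fun j => G j m)
    have hsgl : (Pi.single m 1 : Fin M → F) i = (Pi.single i 1 : Fin M → F) m := by
      simp [Pi.single_apply, eq_comm]
    rw [hsgl] at this
    rw [← this, hψsum]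
    simp only [Finset.sum_apply, Pi.smul_apply, smul_eq_mul]
    exact Finset.sum_congr rfl (fun j _ => mul_comm _ _)
  rw [heq]
  exact Submodule.sum_mem _ (fun j _ =>
    Submodule.smul_mem _ _ (Submodule.subset_span ⟨j, rfl⟩))

/-- Weak security of linear observations: if no standard basis vector lies in the
row space of `G`, then `H(s_i | Y) = H(s_i) = 1` for every coordinate. -/
theorem stmt9 {Ω F : Type*} [Fintype Ω] [Field F] [Fintype F] [DecidableEq F]
    (M Γ : ℕ) (hΓM : Γ < M)
    (μ : Ω → ℝ) (hμ0 : ∀ ω, 0 ≤ μ ω) (hμ1 : ∑ ω, μ ω = 1)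
    (S : Ω → (Fin M → F))
    (hS : ∀ v, pr μ S v = 1 / (Fintype.card F : ℝ) ^ M)
    (G : Matrix (Fin Γ) (Fin M) F)
    (hrow : ∀ i : Fin M,
      Pi.single i (1 : F) ∉ Submodule.span F (Set.range (fun j : Fin Γ => G j))) :
    ∀ i : Fin M,
      condEnt (Fintype.card F : ℝ) μ (fun ω => S ω i) (fun ω => G.mulVec (S ω))
          = ent (Fintype.card F : ℝ) μ (fun ω => S ω i)
      ∧ ent (Fintype.card F : ℝ) μ (fun ω => S ω i) = 1 := by
  classical
  intro i
  obtain ⟨k, hk0, hki⟩ := exists_ker_vec G i (hrow i)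
  set q : ℝ := (Fintype.card F : ℝ) with hq
  have hq1 : 1 < (Fintype.card F : ℝ) := by exact_mod_cast Fintype.one_lt_card
  have hS' : ∀ v, pr μ S v = 1 / (Fintype.card (Fin M → F) : ℝ) := by
    intro v
    rw [hS v, Fintype.card_fun, Fintype.card_fin]
    push_cast
    rfl
  -- the three maps
  set fI : (Fin M → F) → F := fun v => v i with hfI
  set fY : (Fin M → F) → (Fin Γ → F) := fun v => G.mulVec v with hfY
  set fP : (Fin M → F) → F × (Fin Γ → F) := fun v => (v i, G.mulVec v) with hfP
  have hfIsub : ∀ a b, fI (a - b) = fI a - fI b := by intro a b; simp [hfI]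
  have hfYsub : ∀ a b, fY (a - b) = fY a - fY b := by
    intro a b; simp [hfY, Matrix.mulVec_sub]
  have hfPsub : ∀ a b, fP (a - b) = fP a - fP b := by
    intro a b; simp [hfP, Matrix.mulVec_sub, Prod.ext_iff]
  -- image of fI is everything
  have hIimg : (Finset.univ.image fI) = Finset.univ := by
    apply Finset.eq_univ_of_forall
    intro a
    exact Finset.mem_image.mpr ⟨Pi.single i a, Finset.mem_univ _, by simp [hfI]⟩
  -- image of fP is univ ×ˢ image of fY
  have hPimg : (Finset.univ.image fP) = Finset.univ ×ˢ (Finset.univ.image fY) := by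
    ext ⟨a, y⟩
    simp only [Finset.mem_image, Finset.mem_product, Finset.mem_univ, true_and]
    constructor
    · rintro ⟨v, hv⟩
      exact ⟨v, congrArg Prod.snd hv⟩
    · rintro ⟨v₀, hv₀⟩
      refine ⟨v₀ + ((a - v₀ i) * (k i)⁻¹) • k, ?_⟩
      have h1 : fY (v₀ + ((a - v₀ i) * (k i)⁻¹) • k) = y := by
        simp only [hfY] at hv₀ ⊢
        rw [Matrix.mulVec_add, Matrix.mulVec_smul, hk0, smul_zero, add_zero, hv₀]
      have h2 : (v₀ + ((a - v₀ i) * (k i)⁻¹) • k) i = a := by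
        simp only [Pi.add_apply, Pi.smul_apply, smul_eq_mul]
        field_simp
        ring
      simp only [hfP]
      rw [Prod.ext_iff]
      exact ⟨h2, h1⟩
  set n : ℕ := (Finset.univ.image fY).card with hn
  have hnpos : 0 < n :=
    Finset.card_pos.mpr ⟨fY 0, Finset.mem_image_of_mem fY (Finset.mem_univ 0)⟩
  have hnne : (n:ℝ) ≠ 0 := by exact_mod_cast hnpos.ne'
  have hentI : ent q μ (fun ω => S ω i) = 1 := by
    have := ent_comp_linear q μ hμ1 S hS' fI hfIsub
    rw [hIimg, Finset.card_univ] at this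
    rw [show (fun ω => S ω i) = (fun ω => fI (S ω)) from rfl, this, hq]
    exact Real.logb_self_eq_one hq1
  have hentY : ent q μ (fun ω => G.mulVec (S ω)) = Real.logb q n := by
    exact ent_comp_linear q μ hμ1 S hS' fY hfYsub
  have hentP : ent q μ (fun ω => (S ω i, G.mulVec (S ω))) = 1 + Real.logb q n := by
    have := ent_comp_linear q μ hμ1 S hS' fP hfPsub
    rw [hPimg, Finset.card_product, Finset.card_univ] at this
    rw [show (fun ω => (S ω i, G.mulVec (S ω))) = (fun ω => fP (S ω)) from rfl, this]
    push_cast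
    rw [Real.logb_mul (by positivity) hnne, hq, Real.logb_self_eq_one hq1]
  constructor
  · rw [condEnt, hentP, hentY, hentI]
    ring
  · exact hentI
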